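/- Let C be an [n,k,d]_q linear code with dual distance d⊥ and l ≤ min{d,n-k}-1. Let H be an l-separating parity-check matrix for C with rows r_0,...,r_{m-1}. Then the pair ({0,...,n-1}, B) where B is the multiset of zero-sets (complements of supports) of the rows r_i forms an l-(n, K, n-k-l) generalized covering where every block has size at most n-d⊥: every l-subset of coordinates is contained in the zero-set of at least n-k-l rows of H. -/

import Mathlib

variable {F : Type} [Field F] [Fintype F] [DecidableEq F]

/-- The dual code of a linear code `C`. -/
def dualCode {ι : Type} [Fintype ι] (C : Submodule F (ι → F)) : Submodule F (ι → F) where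
  carrier := {x | ∀ c ∈ C, ∑ i, x i * c i = 0}
  add_mem' := by
    intro a b ha hb c hc
    simp only [Set.mem_setOf_eq, Pi.add_apply] at *
    simp [add_mul, Finset.sum_add_distrib, ha c hc, hb c hc]
  zero_mem' := by
    intro c hc
    simp
  smul_mem' := by
    intro a x hx c hc
    simp only [Set.mem_setOf_eq, Pi.smul_apply, smul_eq_mul, mul_assoc,
      ← Finset.mul_sum, hx c hc, mul_zero]

/-- `d` is the minimum distance of the code `D`. -/
def IsMinDist {ι : Type} [Fintype ι] (D : Submodule F (ι → F)) (d : ℕ) : Prop :=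
  (∀ c ∈ D, c ≠ 0 → d ≤ hammingNorm c) ∧ ∃ c ∈ D, c ≠ 0 ∧ hammingNorm c = d

/-- `H(S)`: delete the rows of `H` with a nonzero entry in `S`, and the columns in `S`. -/
def subMat {m n : ℕ} (H : Matrix (Fin m) (Fin n) F) (S : Finset (Fin n)) :
    Matrix {i : Fin m // ∀ j ∈ S, H i j = 0} {j : Fin n // j ∉ S} F :=
  Matrix.of fun i j => H i.1 j.1

/-- `H` is an `l`-separating parity-check matrix for `C`. -/
def IsSeparating {m n : ℕ} (C : Submodule F (Fin n → F)) (H : Matrix (Fin m) (Fin n) F)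
    (l : ℕ) : Prop :=
  Submodule.span F (Set.range fun i => H i) = dualCode C ∧
    ∀ S : Finset (Fin n), S.card ≤ l →
      (subMat H S).rank = n - Module.finrank F C - S.card

/-- The `l`-separating redundancy of `C`. -/
noncomputable def sepRedundancy {n : ℕ} (C : Submodule F (Fin n → F)) (l : ℕ) : ℕ :=
  sInf {m | ∃ H : Matrix (Fin m) (Fin n) F, IsSeparating C H l}

/-- The zero-sets of the rows of an `l`-separating parity-check matrix form an
`l`-(n, K, n-k-l) generalized covering whose blocks (zero-sets of nonzero rows) have size
at most `n - d⊥`. -/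
theorem stmt_13 (n k d dperp l mrows : ℕ)
    (C : Submodule F (Fin n → F)) (hk : Module.finrank F C = k) (hd : IsMinDist C d)
    (hdp : IsMinDist (dualCode C) dperp)
    (hl : l ≤ min d (n - k) - 1)
    (H : Matrix (Fin mrows) (Fin n) F) (hH : IsSeparating C H l) :
    (∀ S : Finset (Fin n), S.card = l →
        n - k - l ≤ (@Finset.filter _ (fun i : Fin mrows => ∀ j ∈ S, H i j = 0)
          (fun _ => Finset.decidableDforallFinset) Finset.univ).card) ∧
      ∀ i, H i ≠ 0 → (Finset.univ.filter fun j : Fin n => H i j = 0).card ≤ n - dperp := by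
  constructor
  · intro S hS
    haveI : DecidablePred (fun i : Fin mrows => ∀ j ∈ S, H i j = 0) :=
      fun _ => Finset.decidableDforallFinset
    have hrank := hH.2 S (le_of_eq hS)
    rw [hk, hS] at hrank
    have hle : (subMat H S).rank ≤ Fintype.card {i : Fin mrows // ∀ j ∈ S, H i j = 0} :=
      Matrix.rank_le_card_height _
    rw [hrank] at hle
    calc n - k - l ≤ Fintype.card {i : Fin mrows // ∀ j ∈ S, H i j = 0} := hle
      _ = (@Finset.filter _ (fun i : Fin mrows => ∀ j ∈ S, H i j = 0)
          (fun _ => Finset.decidableDforallFinset) Finset.univ).card := by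
          rw [Fintype.card_subtype]
          congr 1
          ext x
          simp
  · intro i hi
    have hmem : H i ∈ dualCode C := by
      rw [← hH.1]
      exact Submodule.subset_span ⟨i, rfl⟩
    have hdle : dperp ≤ hammingNorm (H i) := hdp.1 (H i) hmem hi
    have hsplit : (Finset.univ.filter fun j : Fin n => H i j = 0).card
        + (Finset.univ.filter fun j : Fin n => H i j ≠ 0).card = n := by
      rw [Finset.card_filter_add_card_filter_not]
      simp
    have hnorm : hammingNorm (H i) = (Finset.univ.filter fun j : Fin n => H i j ≠ 0).card := rfl
    omega
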